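/- On the EBCV space, [X₆, X₇] = −l(1+m(w²+x²)) X₁ − ml(wz+xy) X₂ + ml(wy−xz) X₃ − 2mz X₆ + 2my X₇. -/

import Mathlib

noncomputable section

open Matrix

/-- Points of `ℝ⁷` with coordinates `(r,s,t,w,x,y,z) = (p 0, …, p 6)`. -/
abbrev E7 : Type := Fin 7 → ℝ

/-- Directional derivative of a function along a vector field. -/
def dirDeriv (A : E7 → E7) (f : E7 → ℝ) (p : E7) : ℝ := fderiv ℝ f p (A p)

/-- Lie bracket of vector fields on `ℝ⁷`: `[A,B] = D_A B − D_B A`. -/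
def vbracket (A B : E7 → E7) (p : E7) : E7 :=
  fderiv ℝ B p (A p) - fderiv ℝ A p (B p)

/-- The conformal factor `K = 1 + m(w² + x² + y² + z²)`. -/
def Kf (m : ℝ) (p : E7) : ℝ := 1 + m * ((p 3)^2 + (p 4)^2 + (p 5)^2 + (p 6)^2)

/-- The coframe `ω¹,…,ω⁷` of the extended BCV metric. -/
def omegaEBCV (m l : ℝ) : Fin 7 → E7 → E7 → ℝ :=
  ![fun p u => u 0 + l/(2 * Kf m p) * (p 3 * u 4 - p 4 * u 3 + p 5 * u 6 - p 6 * u 5),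
    fun p u => u 1 + l/(2 * Kf m p) * (p 3 * u 5 - p 5 * u 3 + p 6 * u 4 - p 4 * u 6),
    fun p u => u 2 + l/(2 * Kf m p) * (p 3 * u 6 - p 6 * u 3 + p 4 * u 5 - p 5 * u 4),
    fun p u => u 3 / Kf m p,
    fun p u => u 4 / Kf m p,
    fun p u => u 5 / Kf m p,
    fun p u => u 6 / Kf m p]

/-- The extended BCV metric `ds²_{m,l}` as a function of a point and two tangent vectors. -/
def gEBCV (m l : ℝ) (p : E7) (u v : E7) : ℝ :=
  (u 3 * v 3 + u 4 * v 4 + u 5 * v 5 + u 6 * v 6) / (Kf m p)^2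
  + (u 0 + l/(2 * Kf m p) * (p 3 * u 4 - p 4 * u 3 + p 5 * u 6 - p 6 * u 5))
    * (v 0 + l/(2 * Kf m p) * (p 3 * v 4 - p 4 * v 3 + p 5 * v 6 - p 6 * v 5))
  + (u 1 + l/(2 * Kf m p) * (p 3 * u 5 - p 5 * u 3 + p 6 * u 4 - p 4 * u 6))
    * (v 1 + l/(2 * Kf m p) * (p 3 * v 5 - p 5 * v 3 + p 6 * v 4 - p 4 * v 6))
  + (u 2 + l/(2 * Kf m p) * (p 3 * u 6 - p 6 * u 3 + p 4 * u 5 - p 5 * u 4))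
    * (v 2 + l/(2 * Kf m p) * (p 3 * v 6 - p 6 * v 3 + p 4 * v 5 - p 5 * v 4))

/-- The orthonormal frame `X₁,…,X₇` of the extended BCV space. -/
def XF (m l : ℝ) : Fin 7 → E7 → E7 :=
  ![fun _ => Pi.single 0 1,
    fun _ => Pi.single 1 1,
    fun _ => Pi.single 2 1,
    fun p => ![l * p 4 / 2, l * p 5 / 2, l * p 6 / 2, Kf m p, 0, 0, 0],
    fun p => ![-(l * p 3 / 2), -(l * p 6 / 2), l * p 5 / 2, 0, Kf m p, 0, 0],
    fun p => ![l * p 6 / 2, -(l * p 3 / 2), -(l * p 4 / 2), 0, 0, Kf m p, 0],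
    fun p => ![-(l * p 5 / 2), l * p 4 / 2, -(l * p 3 / 2), 0, 0, 0, Kf m p]]


open ContinuousLinearMap in
/-- Fréchet derivative of the conformal factor. -/
def DK (m : ℝ) (p : E7) : E7 →L[ℝ] ℝ :=
  (2*m*p 3) • proj (3:Fin 7) + (2*m*p 4) • proj (4:Fin 7)
    + (2*m*p 5) • proj (5:Fin 7) + (2*m*p 6) • proj (6:Fin 7)

open ContinuousLinearMap in
lemma hK (m : ℝ) (p : E7) : HasFDerivAt (Kf m) (DK m p) p := by
  have e : Kf m = fun q : E7 => 1 + m*(q 3*q 3+q 4*q 4+q 5*q 5+q 6*q 6) := by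
    funext q; simp only [Kf]; ring
  rw [e]
  have h : ∀ i : Fin 7, HasFDerivAt (fun q : E7 => q i) (proj i : E7 →L[ℝ] ℝ) p :=
    fun i => (proj i : E7 →L[ℝ] ℝ).hasFDerivAt
  have H := (((((h 3).mul (h 3)).add ((h 4).mul (h 4))).add ((h 5).mul (h 5))).add
    ((h 6).mul (h 6))).const_mul m |>.const_add 1
  convert H using 1
  all_goals try rfl
  ext v; simp [DK]; ring

open ContinuousLinearMap in
def L6 (m l : ℝ) (p : E7) : E7 →L[ℝ] E7 :=
  ContinuousLinearMap.pi
    ![(l/2) • proj (6:Fin 7), (-(l/2)) • proj (3:Fin 7), (-(l/2)) • proj (4:Fin 7),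
      0, 0, DK m p, 0]

open ContinuousLinearMap in
def L7 (m l : ℝ) (p : E7) : E7 →L[ℝ] E7 :=
  ContinuousLinearMap.pi
    ![(-(l/2)) • proj (5:Fin 7), (l/2) • proj (4:Fin 7), (-(l/2)) • proj (3:Fin 7),
      0, 0, 0, DK m p]

open ContinuousLinearMap in
lemma hX6 (m l : ℝ) (p : E7) : HasFDerivAt (XF m l 5) (L6 m l p) p := by
  have e : XF m l 5 = fun p : E7 =>
      (![l * p 6 / 2, -(l * p 3 / 2), -(l * p 4 / 2), 0, 0, Kf m p, 0] : E7) := rfl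
  rw [e]
  apply hasFDerivAt_pi''
  intro i
  have h : ∀ i : Fin 7, HasFDerivAt (fun q : E7 => q i) (proj i : E7 →L[ℝ] ℝ) p :=
    fun i => (proj i : E7 →L[ℝ] ℝ).hasFDerivAt
  fin_cases i <;> simp [L6, proj_pi] <;>
    first
    | exact hK m p
    | exact hasFDerivAt_const _ _
    | (rw [show (fun q : E7 => l * q 6 / 2) = fun q : E7 => (l/2) * q 6 from funext fun q => by ring]
       exact (h 6).const_mul (l/2))
    | (rw [show (fun q : E7 => -(l * q 3 / 2)) = fun q : E7 => (-(l/2)) * q 3 from funext fun q => by ring]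
       exact (h 3).const_mul (-(l/2)))
    | (rw [show (fun q : E7 => -(l * q 4 / 2)) = fun q : E7 => (-(l/2)) * q 4 from funext fun q => by ring]
       exact (h 4).const_mul (-(l/2)))

open ContinuousLinearMap in
lemma hX7 (m l : ℝ) (p : E7) : HasFDerivAt (XF m l 6) (L7 m l p) p := by
  have e : XF m l 6 = fun p : E7 =>
      (![-(l * p 5 / 2), l * p 4 / 2, -(l * p 3 / 2), 0, 0, 0, Kf m p] : E7) := rfl
  rw [e]
  apply hasFDerivAt_pi''
  intro i
  have h : ∀ i : Fin 7, HasFDerivAt (fun q : E7 => q i) (proj i : E7 →L[ℝ] ℝ) p :=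
    fun i => (proj i : E7 →L[ℝ] ℝ).hasFDerivAt
  fin_cases i <;> simp [L7, proj_pi] <;>
    first
    | exact hK m p
    | exact hasFDerivAt_const _ _
    | (rw [show (fun q : E7 => l * q 4 / 2) = fun q : E7 => (l/2) * q 4 from funext fun q => by ring]
       exact (h 4).const_mul (l/2))
    | (rw [show (fun q : E7 => -(l * q 3 / 2)) = fun q : E7 => (-(l/2)) * q 3 from funext fun q => by ring]
       exact (h 3).const_mul (-(l/2)))
    | (rw [show (fun q : E7 => -(l * q 5 / 2)) = fun q : E7 => (-(l/2)) * q 5 from funext fun q => by ring]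
       exact (h 5).const_mul (-(l/2)))


section VecHelpers
variable {α : Type*}
@[local simp] lemma vec7_at0 (a b c d e f g : α) : ![a,b,c,d,e,f,g] (0 : Fin 7) = a := rfl
@[local simp] lemma vec7_at1 (a b c d e f g : α) : ![a,b,c,d,e,f,g] (1 : Fin 7) = b := rfl
@[local simp] lemma vec7_at2 (a b c d e f g : α) : ![a,b,c,d,e,f,g] (2 : Fin 7) = c := rfl
@[local simp] lemma vec7_at3 (a b c d e f g : α) : ![a,b,c,d,e,f,g] (3 : Fin 7) = d := rfl
@[local simp] lemma vec7_at4 (a b c d e f g : α) : ![a,b,c,d,e,f,g] (4 : Fin 7) = e := rfl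
@[local simp] lemma vec7_at5 (a b c d e f g : α) : ![a,b,c,d,e,f,g] (5 : Fin 7) = f := rfl
@[local simp] lemma vec7_at6 (a b c d e f g : α) : ![a,b,c,d,e,f,g] (6 : Fin 7) = g := rfl
end VecHelpers

set_option maxHeartbeats 1000000 in
theorem ebcv_bracket_X6_X7 (m l : ℝ) (p : E7) :
    vbracket (XF m l 5) (XF m l 6) p =
      (-(l * (1 + m * ((p 3)^2 + (p 4)^2)))) • XF m l 0 p
      + (-(m * l * (p 3 * p 6 + p 4 * p 5))) • XF m l 1 p
      + (m * l * (p 3 * p 5 - p 4 * p 6)) • XF m l 2 p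
      + (-(2 * m * p 6)) • XF m l 5 p
      + (2 * m * p 5) • XF m l 6 p := by
  unfold vbracket
  rw [(hX6 m l p).fderiv, (hX7 m l p).fderiv]
  funext i
  fin_cases i <;>
    (simp only [XF, L6, L7, DK, vec7_at0, vec7_at1, vec7_at2, vec7_at3, vec7_at4, vec7_at5,
      vec7_at6, Pi.sub_apply, Pi.add_apply, Pi.smul_apply, smul_eq_mul,
      ContinuousLinearMap.pi_apply, ContinuousLinearMap.add_apply,
      ContinuousLinearMap.coe_smul', Pi.smul_apply, ContinuousLinearMap.proj_apply,
      ContinuousLinearMap.zero_apply, Pi.single_apply, Kf]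
     norm_num [Fin.ext_iff, vec7_at0, vec7_at1, vec7_at2, vec7_at3, vec7_at4, vec7_at5,
       vec7_at6]
     try ring)
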